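/- Let n > m > ℓ ≥ 2 be integers and let H = ⟨a, b, c | a^(2^n) = 1, b^(2^m) = a^(2^m), c^(2^ℓ) = 1, [b,a] = c, [c,a] = c^(-2), [c,b] = c^(-2)⟩. Let S be a commutative ring of characteristic 4 with a maximal ideal n satisfying 2 ∈ n and 2 ∉ n². Set A = a − 1, B = b − 1 in SH and Θ = Δ(SH : n). Then for all α, β ∈ S one has (αA + βB)^(2^(m+1)) ≡ (α + β)^(2^(m+1))·A^(2^(m+1)) (mod Θ^(1 + 2^(m+1))). -/

import Mathlib

/-- Relators of the group `H` from the paper: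
`H = ⟨a,b,c ∣ a^(2^n) = 1, b^(2^m) = a^(2^m), c^(2^l) = 1, [b,a] = c, [c,a] = c⁻², [c,b] = c⁻²⟩`,
where `[g,h] = g⁻¹h⁻¹gh`.  Generators: `0 ↦ a`, `1 ↦ b`, `2 ↦ c`. -/
def hrels (n m l : ℕ) : Set (FreeGroup (Fin 3)) :=
  {FreeGroup.of 0 ^ 2 ^ n, FreeGroup.of 1 ^ 2 ^ m * (FreeGroup.of 0 ^ 2 ^ m)⁻¹,
   FreeGroup.of 2 ^ 2 ^ l,
   (FreeGroup.of 1)⁻¹ * (FreeGroup.of 0)⁻¹ * FreeGroup.of 1 * FreeGroup.of 0 * (FreeGroup.of 2)⁻¹,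
   (FreeGroup.of 2)⁻¹ * (FreeGroup.of 0)⁻¹ * FreeGroup.of 2 * FreeGroup.of 0 * FreeGroup.of 2 ^ 2,
   (FreeGroup.of 2)⁻¹ * (FreeGroup.of 1)⁻¹ * FreeGroup.of 2 * FreeGroup.of 1 * FreeGroup.of 2 ^ 2}

/-- The group `H` of the paper. -/
def GrpH (n m l : ℕ) : Type := PresentedGroup (hrels n m l)

instance (n m l : ℕ) : Group (GrpH n m l) := by unfold GrpH; infer_instance

/-- The augmentation map `ε : SH → S`, sending `Σ α_h h` to `Σ α_h`. -/
noncomputable def aug (S : Type) [CommRing S] (G : Type) [Group G] :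
    MonoidAlgebra S G →ₐ[S] S := MonoidAlgebra.lift S S G 1

/-- The relative augmentation ideal `Δ(SG : n) = ε⁻¹(n) = {x ∈ SG : ε(x) ∈ n}`. -/
noncomputable def relAugIdeal (S : Type) [CommRing S] (nn : Ideal S) (G : Type) [Group G] :
    Ideal (MonoidAlgebra S G) := Ideal.comap (aug S G) nn

/-- `A = a - 1 ∈ SH`. -/
noncomputable def elA (S : Type) [CommRing S] (n m l : ℕ) : MonoidAlgebra S (GrpH n m l) :=
  MonoidAlgebra.of S (GrpH n m l) (PresentedGroup.of 0) - 1
/-- `B = b - 1 ∈ SH`. -/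
noncomputable def elB (S : Type) [CommRing S] (n m l : ℕ) : MonoidAlgebra S (GrpH n m l) :=
  MonoidAlgebra.of S (GrpH n m l) (PresentedGroup.of 1) - 1
/-- `C = c - 1 ∈ SH`. -/
noncomputable def elC (S : Type) [CommRing S] (n m l : ℕ) : MonoidAlgebra S (GrpH n m l) :=
  MonoidAlgebra.of S (GrpH n m l) (PresentedGroup.of 2) - 1


namespace Stmt14Aux

variable (n m l : ℕ)

def gA : GrpH n m l := PresentedGroup.of 0
def gB : GrpH n m l := PresentedGroup.of 1
def gC : GrpH n m l := PresentedGroup.of 2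

lemma mk_rel {r : FreeGroup (Fin 3)} (hr : r ∈ hrels n m l) :
    PresentedGroup.mk (hrels n m l) r = 1 :=
  (QuotientGroup.eq_one_iff r).mpr (Subgroup.subset_normalClosure hr)

lemma relb : gB n m l ^ 2 ^ m = gA n m l ^ 2 ^ m := by
  have h := mk_rel n m l (show FreeGroup.of 1 ^ 2 ^ m * (FreeGroup.of 0 ^ 2 ^ m)⁻¹ ∈ hrels n m l by
    unfold hrels; aesop)
  simp only [map_mul, map_inv, map_pow] at h
  exact mul_inv_eq_one.mp h

lemma relc : gC n m l ^ 2 ^ l = 1 := by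
  have h := mk_rel n m l (show FreeGroup.of 2 ^ 2 ^ l ∈ hrels n m l by unfold hrels; aesop)
  simp only [map_pow] at h
  exact h

lemma relcj {j : ℕ} (hj : l ≤ j) : gC n m l ^ 2 ^ j = 1 := by
  have : (2:ℕ) ^ j = 2 ^ l * 2 ^ (j - l) := by
    rw [← pow_add]; congr 1; omega
  rw [this, pow_mul, relc, one_pow]

lemma rel4 : gB n m l * gA n m l = gA n m l * gB n m l * gC n m l := by
  have h := mk_rel n m l (show (FreeGroup.of 1)⁻¹ * (FreeGroup.of 0)⁻¹ * FreeGroup.of 1 *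
      FreeGroup.of 0 * (FreeGroup.of 2)⁻¹ ∈ hrels n m l by unfold hrels; aesop)
  simp only [map_mul, map_inv] at h
  have h' : (gB n m l)⁻¹ * (gA n m l)⁻¹ * gB n m l * gA n m l = gC n m l := mul_inv_eq_one.mp h
  set a := gA n m l; set b := gB n m l; set c := gC n m l
  calc b * a = (a * b) * (b⁻¹ * a⁻¹ * b * a) := by group
  _ = a * b * c := by rw [h']

lemma rel5 : gC n m l * gA n m l = gA n m l * (gC n m l)⁻¹ := by
  have h := mk_rel n m l (show (FreeGroup.of 2)⁻¹ * (FreeGroup.of 0)⁻¹ * FreeGroup.of 2 *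
      FreeGroup.of 0 * FreeGroup.of 2 ^ 2 ∈ hrels n m l by unfold hrels; aesop)
  simp only [map_mul, map_inv, map_pow] at h
  have h' : (gC n m l)⁻¹ * (gA n m l)⁻¹ * gC n m l * gA n m l = (gC n m l ^ 2)⁻¹ :=
    eq_inv_of_mul_eq_one_left h
  set a := gA n m l; set c := gC n m l
  calc c * a = a * (c * (c⁻¹ * a⁻¹ * c * a)) := by group
  _ = a * (c * (c ^ 2)⁻¹) := by rw [h']
  _ = a * c⁻¹ := by group

lemma rel6 : gC n m l * gB n m l = gB n m l * (gC n m l)⁻¹ := by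
  have h := mk_rel n m l (show (FreeGroup.of 2)⁻¹ * (FreeGroup.of 1)⁻¹ * FreeGroup.of 2 *
      FreeGroup.of 1 * FreeGroup.of 2 ^ 2 ∈ hrels n m l by unfold hrels; aesop)
  simp only [map_mul, map_inv, map_pow] at h
  have h' : (gC n m l)⁻¹ * (gB n m l)⁻¹ * gC n m l * gB n m l = (gC n m l ^ 2)⁻¹ :=
    eq_inv_of_mul_eq_one_left h
  set b := gB n m l; set c := gC n m l
  calc c * b = b * (c * (c⁻¹ * b⁻¹ * c * b)) := by group
  _ = b * (c * (c ^ 2)⁻¹) := by rw [h']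
  _ = b * c⁻¹ := by group

lemma rel4' : gA n m l * gB n m l = gB n m l * gA n m l * (gC n m l)⁻¹ := by
  rw [rel4]; group

lemma conjA_c : (gA n m l)⁻¹ * gC n m l * gA n m l = (gC n m l)⁻¹ := by
  rw [mul_assoc, rel5]; group

lemma conjB_c : (gB n m l)⁻¹ * gC n m l * gB n m l = (gC n m l)⁻¹ := by
  rw [mul_assoc, rel6]; group

lemma conjA_b : (gA n m l)⁻¹ * gB n m l * gA n m l = gB n m l * gC n m l := by
  rw [mul_assoc, rel4]; group

lemma conjB_a : (gB n m l)⁻¹ * gA n m l * gB n m l = gA n m l * (gC n m l)⁻¹ := by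
  rw [mul_assoc, rel4']; group

lemma inv5 : (gC n m l)⁻¹ * gA n m l = gA n m l * gC n m l := by
  have h := congrArg (fun x => (gC n m l)⁻¹ * x * gC n m l) (rel5 n m l)
  set a := gA n m l; set c := gC n m l
  calc c⁻¹ * a = c⁻¹ * (a * c⁻¹) * c := by group
  _ = c⁻¹ * (c * a) * c := h.symm
  _ = a * c := by group

lemma inv6 : (gC n m l)⁻¹ * gB n m l = gB n m l * gC n m l := by
  have h := congrArg (fun x => (gC n m l)⁻¹ * x * gC n m l) (rel6 n m l)
  set b := gB n m l; set c := gC n m l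
  calc c⁻¹ * b = c⁻¹ * (b * c⁻¹) * c := by group
  _ = c⁻¹ * (c * b) * c := h.symm
  _ = b * c := by group

lemma comm_a2_c : gC n m l * (gA n m l * gA n m l) = (gA n m l * gA n m l) * gC n m l := by
  have hc := conjA_c n m l; have h5 := inv5 n m l
  set a := gA n m l; set c := gC n m l
  calc c * (a * a) = (a * (a⁻¹ * c * a)) * a := by group
  _ = (a * c⁻¹) * a := by rw [hc]
  _ = a * (c⁻¹ * a) := by group
  _ = a * (a * c) := by rw [h5]
  _ = (a * a) * c := by group

lemma comm_b2_c : gC n m l * (gB n m l * gB n m l) = (gB n m l * gB n m l) * gC n m l := by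
  have hc := conjB_c n m l; have h6 := inv6 n m l
  set b := gB n m l; set c := gC n m l
  calc c * (b * b) = (b * (b⁻¹ * c * b)) * b := by group
  _ = (b * c⁻¹) * b := by rw [hc]
  _ = b * (c⁻¹ * b) := by group
  _ = b * (b * c) := by rw [h6]
  _ = (b * b) * c := by group

lemma comm_a2_b : gB n m l * (gA n m l * gA n m l) = (gA n m l * gA n m l) * gB n m l := by
  have hb := conjA_b n m l; have h5 := rel5 n m l; have h4 := rel4 n m l
  set a := gA n m l; set b := gB n m l; set c := gC n m l
  calc b * (a * a) = (a * (a⁻¹ * b * a)) * a := by group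
  _ = (a * (b * c)) * a := by rw [hb]
  _ = a * (b * (c * a)) := by group
  _ = a * (b * (a * c⁻¹)) := by rw [h5]
  _ = a * ((b * a) * c⁻¹) := by group
  _ = a * ((a * b * c) * c⁻¹) := by rw [h4]
  _ = (a * a) * b := by group

lemma comm_b2_a : gA n m l * (gB n m l * gB n m l) = (gB n m l * gB n m l) * gA n m l := by
  have hb := conjB_a n m l; have h6 := inv6 n m l; have h4 := rel4' n m l
  set a := gA n m l; set b := gB n m l; set c := gC n m l
  calc a * (b * b) = (b * (b⁻¹ * a * b)) * b := by group
  _ = (b * (a * c⁻¹)) * b := by rw [hb]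
  _ = (b * a) * (c⁻¹ * b) := by group
  _ = (b * a) * (b * c) := by rw [h6]
  _ = b * ((a * b) * c) := by group
  _ = b * ((b * a * c⁻¹) * c) := by rw [h4]
  _ = (b * b) * a := by group



lemma char4_sub_pow {T : Type*} [CommRing T] (h4 : (4:T) = 0) (t : T) (k : ℕ) :
    (t - 1) ^ (2 ^ (k+1)) = t ^ (2 ^ (k+1)) + 2 * t ^ (2 ^ k) + 1 := by
  induction k with
  | zero => norm_num; linear_combination (-t) * h4
  | succ k ih =>
    have ex : ∀ z : T, z ^ (2 ^ (k+2)) = (z ^ (2 ^ (k+1))) ^ 2 := fun z => by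
      rw [← pow_mul, ← pow_succ]
    have ex' : t ^ (2 ^ (k+1)) = (t ^ (2 ^ k)) ^ 2 := by rw [← pow_mul, ← pow_succ]
    rw [ex, ex t, ih, ex']
    set u := t ^ (2 ^ k)
    linear_combination (u^3 + u^2 + u) * h4

lemma char4_add_pow {T : Type*} [CommRing T] (h4 : (4:T) = 0) (x y : T) (k : ℕ) :
    (x + y) ^ (2 ^ (k+1)) = x ^ (2 ^ (k+1)) + 2 * (x*y) ^ (2 ^ k) + y ^ (2 ^ (k+1)) := by
  induction k with
  | zero => norm_num; ring
  | succ k ih =>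
    have ex : ∀ z : T, z ^ (2 ^ (k+2)) = (z ^ (2 ^ (k+1))) ^ 2 := fun z => by
      rw [← pow_mul, ← pow_succ]
    have ex' : (x*y) ^ (2 ^ (k+1)) = ((x*y) ^ (2 ^ k)) ^ 2 := by rw [← pow_mul, ← pow_succ]
    rw [ex, ex x, ex y, ih, ex']
    set P := x ^ (2 ^ (k+1)); set Q := y ^ (2 ^ (k+1)); set Rr := (x*y) ^ (2 ^ k)
    have hPQ : P * Q = Rr ^ 2 := by
      show x ^ (2^(k+1)) * y ^ (2^(k+1)) = _
      rw [← mul_pow, ← pow_mul, ← pow_succ]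
    linear_combination 2 * hPQ + (Rr^2 + P*Rr + Q*Rr) * h4

lemma char4_poly (S : Type) [CommRing S] (h4 : (4:S) = 0) : (4 : Polynomial S) = 0 := by
  rw [← map_ofNat (algebraMap S (Polynomial S)) 4, h4, map_zero]

lemma sub_one_pow_char4 {S : Type} [CommRing S] {R : Type} [Ring R] [Algebra S R]
    (h4 : (4:S) = 0) (x : R) (k : ℕ) :
    (x - 1) ^ (2 ^ (k+1)) = x ^ (2 ^ (k+1)) + 2 * x ^ (2 ^ k) + 1 := by
  have hp := char4_sub_pow (char4_poly S h4) (Polynomial.X) k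
  have := congrArg (Polynomial.aeval x : Polynomial S →ₐ[S] R) hp
  simpa [map_ofNat] using this


section IdealHelpers

variable {R : Type} [Ring R]

lemma mul_mem_pow_add {I : Ideal R} :
    ∀ {j : ℕ}, 1 ≤ j → ∀ {y : R}, y ∈ I ^ j → ∀ {x : R} {i : ℕ}, x ∈ I ^ i →
      x * y ∈ I ^ (i + j) := by
  intro j
  induction j with
  | zero => omega
  | succ j ih =>
    intro _ y hy x i hx
    rcases Nat.eq_zero_or_pos j with hj | hj
    · subst hj
      rw [Submodule.pow_one] at hy
      rw [show i + 1 = i + 1 from rfl, Submodule.pow_succ]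
      exact Submodule.mul_mem_mul hx hy
    · rw [Submodule.pow_succ] at hy
      rw [show i + (j+1) = (i + j) + 1 from rfl, Submodule.pow_succ]
      refine Submodule.mul_induction_on hy (fun u hu v hv => ?_) (fun y1 y2 h1 h2 => ?_)
      · rw [← mul_assoc]
        exact Submodule.mul_mem_mul (ih hj hu hx) hv
      · rw [mul_add]
        exact add_mem h1 h2

lemma pow_absorb {I : Ideal R} (habs : ∀ x ∈ I, ∀ r : R, x * r ∈ I) :
    ∀ {k : ℕ}, 1 ≤ k → ∀ {x : R}, x ∈ I ^ k → ∀ r : R, x * r ∈ I ^ k := by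
  intro k
  induction k with
  | zero => omega
  | succ k ih =>
    intro _ x hx r
    rcases Nat.eq_zero_or_pos k with hk | hk
    · subst hk
      rw [Submodule.pow_one] at hx ⊢
      exact habs x hx r
    · rw [Submodule.pow_succ] at hx ⊢
      refine Submodule.mul_induction_on hx (fun u hu v hv => ?_) (fun y1 y2 h1 h2 => ?_)
      · rw [mul_assoc]
        exact Submodule.mul_mem_mul hu (habs v hv r)
      · rw [add_mul]
        exact add_mem h1 h2

lemma pow_le_pow' {I : Ideal R} (habs : ∀ x ∈ I, ∀ r : R, x * r ∈ I) {k : ℕ}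
    (hk : 1 ≤ k) : ∀ {j : ℕ}, k ≤ j → I ^ j ≤ I ^ k := by
  intro j
  induction j with
  | zero => intro h; exact absurd h (by omega)
  | succ j ih =>
    intro h
    by_cases hkj : k = j + 1
    · subst hkj; exact le_refl _
    · have hkj' : k ≤ j := by omega
      rw [Submodule.pow_succ]
      intro x hx
      refine Submodule.mul_induction_on hx (fun u hu v hv => ?_)
        (fun y1 y2 h1 h2 => add_mem h1 h2)
      exact ih hkj' (pow_absorb habs (by omega) hu v)

lemma mem_pow_mul {I : Ideal R} {x y : R} {i j k : ℕ} (habs : ∀ x ∈ I, ∀ r : R, x * r ∈ I)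
    (hx : x ∈ I ^ i) (hy : y ∈ I ^ j) (hj : 1 ≤ j) (hk1 : 1 ≤ k) (hk : k ≤ i + j) :
    x * y ∈ I ^ k :=
  pow_le_pow' habs hk1 hk (mul_mem_pow_add hj hy hx)

lemma pow_mem_pow' {I : Ideal R} {a : R} {s : ℕ} (hs : 1 ≤ s) (h : a ∈ I ^ s) :
    ∀ {t : ℕ}, 1 ≤ t → a ^ t ∈ I ^ (s * t) := by
  intro t
  induction t with
  | zero => omega
  | succ t ih =>
    intro _
    rcases Nat.eq_zero_or_pos t with ht | ht
    · subst ht; simpa using h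
    · have := mul_mem_pow_add hs h (ih ht)
      rw [← pow_succ] at this
      rw [show s * (t+1) = s * t + s from by ring]
      exact this

lemma mul_memI {J : Ideal R} (x : R) {y : R} (h : y ∈ J) : x * y ∈ J :=
  Ideal.mul_mem_left J x h

lemma smul_memI {S : Type} [CommRing S] [Algebra S R] (α : S) {x : R} {J : Ideal R}
    (h : x ∈ J) : α • x ∈ J := by
  rw [Algebra.smul_def]; exact Ideal.mul_mem_left _ _ h

lemma comm_even {x y : R} (h : Commute (x * x) y) (j : ℕ) : Commute (x ^ (2 * j)) y := by
  have e : x ^ (2 * j) = (x * x) ^ j := by rw [← sq, pow_mul]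
  rw [e]; exact h.pow_left j

end IdealHelpers

section RingLevel

variable {G : Type} [Group G] (S : Type) [CommRing S] (nn : Ideal S)

lemma aug_of (g : G) : aug S G (MonoidAlgebra.of S G g) = 1 := by
  rw [aug, MonoidAlgebra.lift_of]; rfl

lemma relAug_absorb : ∀ x ∈ relAugIdeal S nn G, ∀ r : MonoidAlgebra S G,
    x * r ∈ relAugIdeal S nn G := by
  intro x hx r
  rw [relAugIdeal, Ideal.mem_comap] at hx ⊢
  rw [map_mul]
  exact Ideal.mul_mem_right _ nn hx

lemma mem_aug (g : G) : MonoidAlgebra.of S G g - 1 ∈ relAugIdeal S nn G := by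
  rw [relAugIdeal, Ideal.mem_comap, map_sub, map_one, aug_of, sub_self]
  exact zero_mem nn

lemma two_mem (h2 : (2:S) ∈ nn) : (2 : MonoidAlgebra S G) ∈ relAugIdeal S nn G := by
  rw [relAugIdeal, Ideal.mem_comap, map_ofNat]
  exact h2

end RingLevel

section Main

variable {n m l : ℕ} {S : Type} [CommRing S] {nn : Ideal S}

set_option maxHeartbeats 1000000 in
lemma key (h4S : (4:S) = 0) (h2n : (2:S) ∈ nn) (α β : S) (k : ℕ) :
    (α • elA S n m l + β • elB S n m l) ^ 2 ^ (k+1)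
      - (α ^ 2 ^ (k+1) • elA S n m l ^ 2 ^ (k+1) + β ^ 2 ^ (k+1) • elB S n m l ^ 2 ^ (k+1)
         + (α*β) ^ 2 ^ k • elC S n m l ^ 2 ^ k)
      ∈ relAugIdeal S nn (GrpH n m l) ^ (2 ^ (k+1) + 1) := by
  have habs := relAug_absorb S nn (G := GrpH n m l)
  set Θ := relAugIdeal S nn (GrpH n m l) with hTh
  set fa := MonoidAlgebra.of S (GrpH n m l) (gA n m l) with hfa
  set fb := MonoidAlgebra.of S (GrpH n m l) (gB n m l) with hfb
  set fc := MonoidAlgebra.of S (GrpH n m l) (gC n m l) with hfc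
  set A := elA S n m l with hA
  set B := elB S n m l with hB
  set C := elC S n m l with hC
  have hAfa : A = fa - 1 := rfl
  have hBfb : B = fb - 1 := rfl
  have hCfc : C = fc - 1 := rfl
  have h4R : (4 : MonoidAlgebra S (GrpH n m l)) = 0 := by
    rw [← map_ofNat (algebraMap S (MonoidAlgebra S (GrpH n m l))) 4, h4S, map_zero]
  have hA1 : A ∈ Θ ^ 1 := by
    rw [Submodule.pow_one, hAfa, hfa, hTh]; exact mem_aug S nn _
  have hB1 : B ∈ Θ ^ 1 := by
    rw [Submodule.pow_one, hBfb, hfb, hTh]; exact mem_aug S nn _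
  have h21 : (2 : MonoidAlgebra S (GrpH n m l)) ∈ Θ ^ 1 := by
    rw [Submodule.pow_one, hTh]; exact two_mem S nn h2n
  have hba : fb * fa = fa * fb * fc := by
    have h := congrArg (MonoidAlgebra.of S (GrpH n m l)) (rel4 n m l)
    simp only [map_mul] at h
    exact h
  have hBA : B * A - A * B = (fa * fb) * C := by
    calc B * A - A * B = fb * fa - fa * fb := by rw [hAfa, hBfb]; noncomm_ring
    _ = fa * fb * fc - fa * fb := by rw [hba]
    _ = (fa * fb) * C := by rw [hCfc]; noncomm_ring
  have hfab : fa * fb = MonoidAlgebra.of S (GrpH n m l) (gA n m l * gB n m l) := by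
    rw [map_mul, hfa, hfb]
  have hab1 : fa * fb - 1 ∈ Θ ^ 1 := by
    rw [Submodule.pow_one, hfab, hTh]; exact mem_aug S nn _
  have hC2 : C ∈ Θ ^ 2 := by
    have hmem : B * A - A * B ∈ Θ ^ 2 := by
      rw [show (2:ℕ) = 1 + 1 from rfl]
      exact sub_mem (mul_mem_pow_add le_rfl hA1 hB1) (mul_mem_pow_add le_rfl hB1 hA1)
    have hCid : C = MonoidAlgebra.of S (GrpH n m l) ((gA n m l * gB n m l)⁻¹) * (B * A - A * B) := by
      rw [hBA, hfab, ← mul_assoc, ← map_mul, inv_mul_cancel, map_one, one_mul]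
    rw [hCid]
    exact mul_memI _ hmem
  have hCpow : ∀ {t : ℕ}, 1 ≤ t → C ^ t ∈ Θ ^ (2*t) := fun {t} ht =>
    pow_mem_pow' (by omega) hC2 ht
  have hApow : ∀ {t : ℕ}, 1 ≤ t → A ^ t ∈ Θ ^ t := fun {t} ht => by
    have := pow_mem_pow' le_rfl hA1 ht; rwa [one_mul] at this
  have hBpow : ∀ {t : ℕ}, 1 ≤ t → B ^ t ∈ Θ ^ t := fun {t} ht => by
    have := pow_mem_pow' le_rfl hB1 ht; rwa [one_mul] at this
  have cAAb : Commute (fa * fa) fb := by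
    have h := congrArg (MonoidAlgebra.of S (GrpH n m l)) (comm_a2_b n m l)
    simp only [map_mul] at h; exact h.symm
  have cAAc : Commute (fa * fa) fc := by
    have h := congrArg (MonoidAlgebra.of S (GrpH n m l)) (comm_a2_c n m l)
    simp only [map_mul] at h; exact h.symm
  have cBBa : Commute (fb * fb) fa := by
    have h := congrArg (MonoidAlgebra.of S (GrpH n m l)) (comm_b2_a n m l)
    simp only [map_mul] at h; exact h.symm
  have cBBc : Commute (fb * fb) fc := by
    have h := congrArg (MonoidAlgebra.of S (GrpH n m l)) (comm_b2_c n m l)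
    simp only [map_mul] at h; exact h.symm
  have c2R : ∀ z : MonoidAlgebra S (GrpH n m l), Commute (2 : MonoidAlgebra S (GrpH n m l)) z :=
    fun z => Commute.ofNat_left 2 z
  have cmul2 : ∀ {x y : MonoidAlgebra S (GrpH n m l)}, Commute x y → Commute x (2*y) :=
    fun {x y} h => ((c2R x).symm).mul_right h
  have cmul2' : ∀ {x y : MonoidAlgebra S (GrpH n m l)}, Commute x y → Commute (2*x) y :=
    fun {x y} h => (c2R y).mul_left h
  have zz : ∀ x y : MonoidAlgebra S (GrpH n m l), (2*x) * (2*y) = 0 := fun x y => by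
    calc (2*x)*(2*y) = 2*((x*2)*y) := by noncomm_ring
    _ = 2*((2*x)*y) := by rw [← (c2R x).eq]
    _ = (2*2)*(x*y) := by noncomm_ring
    _ = (4 : MonoidAlgebra S (GrpH n m l))*(x*y) := by norm_num
    _ = 0 := by rw [h4R, zero_mul]
  have czz : ∀ x y : MonoidAlgebra S (GrpH n m l), Commute (2*x) (2*y) := fun x y => by
    show (2*x)*(2*y) = (2*y)*(2*x)
    rw [zz, zz]
  have gen2 : ∀ x1 x2 : MonoidAlgebra S (GrpH n m l),
      (x1+x2)*(x1+x2) = x1*x1 + x1*x2 + x2*x1 + x2*x2 := fun _ _ => by noncomm_ring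
  induction k with
  | zero =>
    simp only [show (2:ℕ)^(0+1) = 2 from rfl, show (2:ℕ)^0 = 1 from rfl, pow_one]
    have hGoalEq : (α • A + β • B)^2 - (α^2 • A^2 + β^2 • B^2 + (α*β) • C)
        = (α*β) • (A*B + B*A - C) := by
      rw [pow_two (α • A + β • B), pow_two A, pow_two B, pow_two α, pow_two β, gen2]
      simp only [smul_mul_smul_comm]
      module
    rw [hGoalEq]
    refine smul_memI _ ?_
    have h1 : A*B + B*A - C = 2*(A*B) + (fa*fb - 1)*C := by
      calc A*B + B*A - C = 2*(A*B) + ((B*A - A*B) - C) := by noncomm_ring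
      _ = 2*(A*B) + ((fa*fb)*C - C) := by rw [hBA]
      _ = 2*(A*B) + (fa*fb - 1)*C := by noncomm_ring
    rw [h1]
    refine add_mem ?_ ?_
    · exact mem_pow_mul habs h21 (mul_mem_pow_add le_rfl hB1 hA1) (by omega) (by omega) (by omega)
    · exact mem_pow_mul habs hab1 hC2 (by omega) (by omega) (by omega)
  | succ k ih =>
    have hM1 : 1 ≤ (2:ℕ)^k := Nat.one_le_two_pow
    have hN1 : 1 ≤ (2:ℕ)^(k+1) := Nat.one_le_two_pow
    have eN : (2:ℕ)^(k+1) = 2*2^k := by omega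
    have cfA : A^(2^(k+1)) = fa^(2^(k+1)) + 2*fa^(2^k) + 1 := by
      rw [hAfa]; exact sub_one_pow_char4 h4S fa k
    have cfB : B^(2^(k+1)) = fb^(2^(k+1)) + 2*fb^(2^k) + 1 := by
      rw [hBfb]; exact sub_one_pow_char4 h4S fb k
    have cNab : Commute (fa^(2^(k+1))) fb := by rw [eN]; exact comm_even cAAb _
    have cNba : Commute (fb^(2^(k+1))) fa := by rw [eN]; exact comm_even cBBa _
    have cNac : Commute (fa^(2^(k+1))) fc := by rw [eN]; exact comm_even cAAc _
    have cNbc : Commute (fb^(2^(k+1))) fc := by rw [eN]; exact comm_even cBBc _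
    have commAB : Commute (A^(2^(k+1))) (B^(2^(k+1))) := by
      rw [cfA, cfB]
      have u1 : Commute (fa^(2^(k+1))) (fb^(2^(k+1)) + 2*fb^(2^k) + 1) :=
        ((cNab.pow_right _).add_right (cmul2 (cNab.pow_right _))).add_right (Commute.one_right _)
      have u2 : Commute (2*fa^(2^k)) (fb^(2^(k+1)) + 2*fb^(2^k) + 1) :=
        ((cmul2' ((cNba.symm).pow_left _)).add_right (czz _ _)).add_right (Commute.one_right _)
      exact (u1.add_left u2).add_left (Commute.one_left _)
    have sAB : A^(2^(k+1)) * B^(2^(k+1)) + B^(2^(k+1)) * A^(2^(k+1)) ∈ Θ^(2^(k+1+1)+1) := by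
      rw [← commAB.eq, ← two_mul]
      exact mem_pow_mul habs h21 (mul_mem_pow_add hN1 (hBpow hN1) (hApow hN1))
        (by omega) (by omega) (by omega)
    have hcainv : fc * fa = fa * MonoidAlgebra.of S (GrpH n m l) ((gC n m l)⁻¹) := by
      have h := congrArg (MonoidAlgebra.of S (GrpH n m l)) (rel5 n m l)
      simp only [map_mul] at h
      exact h
    have hcbinv : fc * fb = fb * MonoidAlgebra.of S (GrpH n m l) ((gC n m l)⁻¹) := by
      have h := congrArg (MonoidAlgebra.of S (GrpH n m l)) (rel6 n m l)
      simp only [map_mul] at h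
      exact h
    set fc' := MonoidAlgebra.of S (GrpH n m l) ((gC n m l)⁻¹) with hfc9
    have hfcinv : fc' * fc = 1 := by rw [hfc9, hfc, ← map_mul, inv_mul_cancel, map_one]
    have hcsq : fc * fc - 1 = C*C + 2*C := by rw [hCfc]; noncomm_ring
    have hdiff : fc' - fc = -(fc' * (C*C + 2*C)) := by
      rw [← hcsq, mul_sub, ← mul_assoc, hfcinv, one_mul, mul_one, neg_sub]
    have sAC : A^(2^(k+1)) * C^(2^k) + C^(2^k) * A^(2^(k+1)) ∈ Θ^(2^(k+1+1)+1) := by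
      rcases Nat.eq_zero_or_pos k with hk0 | hkpos
      · subst hk0
        norm_num only
        simp only [pow_one]
        norm_num only at cfA
        have hswap : C * A^2 - A^2 * C = 2*(fa*(fc' - fc)) := by
          calc C * A^2 - A^2 * C = (fc*(fa*fa) - (fa*fa)*fc) + 2*(fc*fa - fa*fc) := by
                rw [cfA, hCfc, pow_two]; noncomm_ring
          _ = (fc*(fa*fa) - (fa*fa)*fc) + 2*(fa*fc' - fa*fc) := by rw [hcainv]
          _ = 2*(fa*(fc' - fc)) := by rw [← cAAc.eq]; noncomm_ring
        have key0 : C * A^2 - A^2 * C = -(2*((fa*fc')*(C*C))) := by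
          rw [hswap, hdiff]
          have hexp0 : 2*(fa*(-(fc' * (C*C + 2*C))))
              = -(2*((fa*fc')*(C*C))) - 4*((fa*fc')*C) := by
            noncomm_ring
          rw [hexp0, h4R, zero_mul, sub_zero]
        have split : A^2*C + C*A^2 = 2*(A^2*C) + (C*A^2 - A^2*C) := by noncomm_ring
        rw [split, key0]
        refine add_mem ?_ (neg_mem ?_)
        · exact mem_pow_mul habs h21 (mul_mem_pow_add (by omega) hC2 (hApow (by omega)))
            (by omega) (by omega) (by omega)
        · exact mem_pow_mul habs h21 (mul_memI _ (mul_mem_pow_add (by omega) hC2 hC2))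
            (by omega) (by omega) (by omega)
      · obtain ⟨j, rfl⟩ : ∃ j, k = j + 1 := ⟨k-1, by omega⟩
        have cfC : C^(2^(j+1)) = fc^(2^(j+1)) + 2*fc^(2^j) + 1 := by
          rw [hCfc]; exact sub_one_pow_char4 h4S fc j
        have pAm : Commute (fa^(2^(j+1))) fc := by
          rw [show (2:ℕ)^(j+1) = 2*2^j from by omega]; exact comm_even cAAc _
        have commAC : Commute (A^(2^(j+1+1))) (C^(2^(j+1))) := by
          rw [cfA, cfC]
          have u1 : Commute (fa^(2^(j+1+1))) (fc^(2^(j+1)) + 2*fc^(2^j) + 1) :=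
            ((cNac.pow_right _).add_right (cmul2 (cNac.pow_right _))).add_right
              (Commute.one_right _)
          have u2 : Commute (2*fa^(2^(j+1))) (fc^(2^(j+1)) + 2*fc^(2^j) + 1) :=
            ((cmul2' (pAm.pow_right _)).add_right (czz _ _)).add_right (Commute.one_right _)
          exact (u1.add_left u2).add_left (Commute.one_left _)
        rw [← commAC.eq, ← two_mul]
        exact mem_pow_mul habs h21
          (mul_mem_pow_add (by omega) (hCpow (by omega)) (hApow (by omega)))
          (by omega) (by omega) (by omega)
    have sBC : B^(2^(k+1)) * C^(2^k) + C^(2^k) * B^(2^(k+1)) ∈ Θ^(2^(k+1+1)+1) := by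
      rcases Nat.eq_zero_or_pos k with hk0 | hkpos
      · subst hk0
        norm_num only
        simp only [pow_one]
        norm_num only at cfB
        have hswap : C * B^2 - B^2 * C = 2*(fb*(fc' - fc)) := by
          calc C * B^2 - B^2 * C = (fc*(fb*fb) - (fb*fb)*fc) + 2*(fc*fb - fb*fc) := by
                rw [cfB, hCfc, pow_two]; noncomm_ring
          _ = (fc*(fb*fb) - (fb*fb)*fc) + 2*(fb*fc' - fb*fc) := by rw [hcbinv]
          _ = 2*(fb*(fc' - fc)) := by rw [← cBBc.eq]; noncomm_ring
        have key0 : C * B^2 - B^2 * C = -(2*((fb*fc')*(C*C))) := by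
          rw [hswap, hdiff]
          have hexp0 : 2*(fb*(-(fc' * (C*C + 2*C))))
              = -(2*((fb*fc')*(C*C))) - 4*((fb*fc')*C) := by
            noncomm_ring
          rw [hexp0, h4R, zero_mul, sub_zero]
        have split : B^2*C + C*B^2 = 2*(B^2*C) + (C*B^2 - B^2*C) := by noncomm_ring
        rw [split, key0]
        refine add_mem ?_ (neg_mem ?_)
        · exact mem_pow_mul habs h21 (mul_mem_pow_add (by omega) hC2 (hBpow (by omega)))
            (by omega) (by omega) (by omega)
        · exact mem_pow_mul habs h21 (mul_memI _ (mul_mem_pow_add (by omega) hC2 hC2))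
            (by omega) (by omega) (by omega)
      · obtain ⟨j, rfl⟩ : ∃ j, k = j + 1 := ⟨k-1, by omega⟩
        have cfC : C^(2^(j+1)) = fc^(2^(j+1)) + 2*fc^(2^j) + 1 := by
          rw [hCfc]; exact sub_one_pow_char4 h4S fc j
        have pBm : Commute (fb^(2^(j+1))) fc := by
          rw [show (2:ℕ)^(j+1) = 2*2^j from by omega]; exact comm_even cBBc _
        have commBC : Commute (B^(2^(j+1+1))) (C^(2^(j+1))) := by
          rw [cfB, cfC]
          have u1 : Commute (fb^(2^(j+1+1))) (fc^(2^(j+1)) + 2*fc^(2^j) + 1) :=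
            ((cNbc.pow_right _).add_right (cmul2 (cNbc.pow_right _))).add_right
              (Commute.one_right _)
          have u2 : Commute (2*fb^(2^(j+1))) (fc^(2^(j+1)) + 2*fc^(2^j) + 1) :=
            ((cmul2' (pBm.pow_right _)).add_right (czz _ _)).add_right (Commute.one_right _)
          exact (u1.add_left u2).add_left (Commute.one_left _)
        rw [← commBC.eq, ← two_mul]
        exact mem_pow_mul habs h21
          (mul_mem_pow_add (by omega) (hCpow (by omega)) (hBpow (by omega)))
          (by omega) (by omega) (by omega)
    set x1 := α^(2^(k+1)) • A^(2^(k+1)) with hx1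
    set x2 := β^(2^(k+1)) • B^(2^(k+1)) with hx2
    set x3 := (α*β)^(2^k) • C^(2^k) with hx3
    set ek := (α • A + β • B)^(2^(k+1)) - (x1 + x2 + x3) with hek
    have hD : (α • A + β • B)^(2^(k+1)) = (x1 + x2 + x3) + ek := by rw [hek]; abel
    have hXmem : x1 + x2 + x3 ∈ Θ^(2^(k+1)) := by
      refine add_mem (add_mem (smul_memI _ (hApow hN1)) (smul_memI _ (hBpow hN1)))
        (smul_memI _ ?_)
      have := hCpow hM1
      rwa [← eN] at this
    have d1 : x1*x1 = α^(2^(k+1+1)) • A^(2^(k+1+1)) := by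
      rw [hx1, smul_mul_smul_comm, ← pow_add, ← pow_add,
        show (2:ℕ)^(k+1)+2^(k+1) = 2^(k+1+1) from by omega]
    have d2 : x2*x2 = β^(2^(k+1+1)) • B^(2^(k+1+1)) := by
      rw [hx2, smul_mul_smul_comm, ← pow_add, ← pow_add,
        show (2:ℕ)^(k+1)+2^(k+1) = 2^(k+1+1) from by omega]
    have d3 : x3*x3 = (α*β)^(2^(k+1)) • C^(2^(k+1)) := by
      rw [hx3, smul_mul_smul_comm, ← pow_add, ← pow_add,
        show (2:ℕ)^k+2^k = 2^(k+1) from by omega]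
    have cr12 : x1*x2 + x2*x1 ∈ Θ^(2^(k+1+1)+1) := by
      rw [hx1, hx2, smul_mul_smul_comm, smul_mul_smul_comm,
        mul_comm (β^(2^(k+1))) (α^(2^(k+1))), ← smul_add]
      exact smul_memI _ sAB
    have cr13 : x1*x3 + x3*x1 ∈ Θ^(2^(k+1+1)+1) := by
      rw [hx1, hx3, smul_mul_smul_comm, smul_mul_smul_comm,
        mul_comm ((α*β)^(2^k)) (α^(2^(k+1))), ← smul_add]
      exact smul_memI _ sAC
    have cr23 : x2*x3 + x3*x2 ∈ Θ^(2^(k+1+1)+1) := by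
      rw [hx2, hx3, smul_mul_smul_comm, smul_mul_smul_comm,
        mul_comm ((α*β)^(2^k)) (β^(2^(k+1))), ← smul_add]
      exact smul_memI _ sBC
    have hDstep : (α • A + β • B)^(2^(k+1+1))
        = ((α • A + β • B)^(2^(k+1)))*((α • A + β • B)^(2^(k+1))) := by
      rw [← pow_add]
      congr 1
      omega
    have hmain : (α • A + β • B)^(2^(k+1+1))
        - (α^(2^(k+1+1)) • A^(2^(k+1+1)) + β^(2^(k+1+1)) • B^(2^(k+1+1))
           + (α*β)^(2^(k+1)) • C^(2^(k+1)))
        = ((x1*x2 + x2*x1) + (x1*x3 + x3*x1) + (x2*x3 + x3*x2))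
          + ((x1+x2+x3)*ek + ek*(x1+x2+x3) + ek*ek) := by
      rw [hDstep, hD, ← d1, ← d2, ← d3]
      noncomm_ring
    rw [hmain]
    refine add_mem (add_mem (add_mem cr12 cr13) cr23) (add_mem (add_mem ?_ ?_) ?_)
    · exact mem_pow_mul habs hXmem ih (by omega) (by omega) (by omega)
    · exact mem_pow_mul habs ih hXmem (by omega) (by omega) (by omega)
    · exact mem_pow_mul habs ih ih (by omega) (by omega) (by omega)

end Main


end Stmt14Aux

theorem stmt14 (n m l : ℕ) (h1 : n > m) (h2 : m > l) (h3 : 2 ≤ l)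
    (S : Type) [CommRing S] (hchar : CharP S 4)
    (nn : Ideal S) (hnn : nn.IsMaximal) (h2n : (2 : S) ∈ nn) (h2n2 : (2 : S) ∉ nn ^ 2)
    (α β : S) :
    (α • elA S n m l + β • elB S n m l) ^ 2 ^ (m + 1)
      - (α + β) ^ 2 ^ (m + 1) • elA S n m l ^ 2 ^ (m + 1)
      ∈ relAugIdeal S nn (GrpH n m l) ^ (1 + 2 ^ (m + 1)) := by
  open Stmt14Aux in
  have h4S : (4:S) = 0 := by simpa using CharP.cast_eq_zero S 4
  have habs := Stmt14Aux.relAug_absorb S nn (G := GrpH n m l)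
  set Θ := relAugIdeal S nn (GrpH n m l) with hTh
  set fa := MonoidAlgebra.of S (GrpH n m l) (Stmt14Aux.gA n m l) with hfa
  set fb := MonoidAlgebra.of S (GrpH n m l) (Stmt14Aux.gB n m l) with hfb
  set fc := MonoidAlgebra.of S (GrpH n m l) (Stmt14Aux.gC n m l) with hfc
  have h4R : (4 : MonoidAlgebra S (GrpH n m l)) = 0 := by
    rw [← map_ofNat (algebraMap S (MonoidAlgebra S (GrpH n m l))) 4, h4S, map_zero]
  have h21 : (2 : MonoidAlgebra S (GrpH n m l)) ∈ Θ ^ 1 := by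
    rw [Submodule.pow_one, hTh]; exact Stmt14Aux.two_mem S nn h2n
  have hA1 : elA S n m l ∈ Θ ^ 1 := by
    rw [Submodule.pow_one, hTh]; exact Stmt14Aux.mem_aug S nn _
  have hAN : elA S n m l ^ (2^(m+1)) ∈ Θ ^ (2^(m+1)) := by
    have := Stmt14Aux.pow_mem_pow' le_rfl hA1 (t := 2^(m+1)) Nat.one_le_two_pow
    rwa [one_mul] at this
  -- c power vanishing
  have hfcl : fc ^ (2^l) = 1 := by rw [hfc, ← map_pow, Stmt14Aux.relc, map_one]
  have hfcpow : ∀ {j : ℕ}, l ≤ j → fc ^ (2^j) = 1 := fun {j} hj => by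
    rw [show (2:ℕ)^j = 2^l * 2^(j-l) from by rw [← pow_add]; congr 1; omega, pow_mul, hfcl,
      one_pow]
  have hCm : elC S n m l ^ (2^m) = 0 := by
    have hcf := Stmt14Aux.sub_one_pow_char4 (S := S) h4S fc (m-1)
    rw [show m-1+1 = m from by omega] at hcf
    have e1 : fc ^ (2^m) = 1 := hfcpow (by omega)
    have e2 : fc ^ (2^(m-1)) = 1 := hfcpow (by omega)
    have : elC S n m l = fc - 1 := rfl
    rw [this, hcf, e1, e2, mul_one]
    calc (1 : MonoidAlgebra S (GrpH n m l)) + 2 + 1 = 4 := by norm_num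
    _ = 0 := h4R
  -- b power identification
  have hbm : fb ^ (2^m) = fa ^ (2^m) := by
    rw [hfa, hfb, ← map_pow, ← map_pow, Stmt14Aux.relb]
  have hbm2 : fb ^ (2^(m+1)) = fa ^ (2^(m+1)) := by
    rw [show (2:ℕ)^(m+1) = 2^m*2 from by omega, pow_mul, pow_mul, hbm]
  have hBm : elB S n m l ^ (2^(m+1)) = elA S n m l ^ (2^(m+1)) := by
    have ha := Stmt14Aux.sub_one_pow_char4 (S := S) h4S fa m
    have hb := Stmt14Aux.sub_one_pow_char4 (S := S) h4S fb m
    have eB : elB S n m l = fb - 1 := rfl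
    have eA : elA S n m l = fa - 1 := rfl
    rw [eA, eB, ha, hb, hbm, hbm2]
  -- scalar identity
  have hsc : (α+β)^(2^(m+1)) = α^(2^(m+1)) + 2*(α*β)^(2^m) + β^(2^(m+1)) :=
    Stmt14Aux.char4_add_pow h4S α β m
  -- the key congruence
  have hkey : (α • elA S n m l + β • elB S n m l) ^ 2 ^ (m+1)
      - (α ^ 2^(m+1) • elA S n m l ^ 2^(m+1) + β ^ 2^(m+1) • elA S n m l ^ 2^(m+1))
      ∈ Θ ^ (2^(m+1) + 1) := by
    have h := Stmt14Aux.key (n := n) (m := m) (l := l) h4S h2n α β m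
    rw [hBm, hCm, smul_zero, add_zero] at h
    exact h
  have hmem2 : ((2:S)*(α*β)^(2^m)) • elA S n m l ^ (2^(m+1)) ∈ Θ ^ (2^(m+1) + 1) := by
    rw [Algebra.smul_def, map_mul, map_ofNat, mul_assoc]
    exact Stmt14Aux.mem_pow_mul habs h21 (Stmt14Aux.mul_memI _ hAN)
      Nat.one_le_two_pow (Nat.succ_le_succ (Nat.zero_le _)) (le_of_eq (Nat.add_comm _ _))
  rw [hsc, show 1 + 2^(m+1) = 2^(m+1) + 1 from Nat.add_comm _ _]
  have final : (α • elA S n m l + β • elB S n m l) ^ 2 ^ (m + 1)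
      - (α^(2^(m+1)) + 2*(α*β)^(2^m) + β^(2^(m+1))) • elA S n m l ^ 2 ^ (m + 1)
      = ((α • elA S n m l + β • elB S n m l) ^ 2 ^ (m+1)
         - (α ^ 2^(m+1) • elA S n m l ^ 2^(m+1) + β ^ 2^(m+1) • elA S n m l ^ 2^(m+1)))
        - ((2:S)*(α*β)^(2^m)) • elA S n m l ^ (2^(m+1)) := by
    module
  rw [final]
  exact sub_mem hkey hmem2
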